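/- A topological space is metrizable if and only if it is a collectionwise normal Moore space. -/

import Mathlib

/-- A development for a topological space: a sequence of open covers `G n` such that
for every point `x` and open `U ∋ x` some `G n` has all its members containing `x`
inside `U`. -/
def IsDevelopment (X : Type) [TopologicalSpace X] (G : ℕ → Set (Set X)) : Prop :=
  (∀ n, ∀ U ∈ G n, IsOpen U) ∧
  (∀ n, ∀ x : X, ∃ U ∈ G n, x ∈ U) ∧
  ∀ (x : X) (U : Set X), IsOpen U → x ∈ U →
    ∃ n, ∀ V ∈ G n, x ∈ V → V ⊆ U

/-- A Moore space: a regular Hausdorff space admitting a development. -/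
def MooreSpace (X : Type) [TopologicalSpace X] : Prop :=
  T2Space X ∧ RegularSpace X ∧ ∃ G : ℕ → Set (Set X), IsDevelopment X G

/-- A family of sets is discrete: every point has a neighbourhood meeting at most one
member of the family. -/
def DiscreteFamily (X : Type) [TopologicalSpace X] {ι : Type} (F : ι → Set X) : Prop :=
  ∀ x : X, ∃ V : Set X, IsOpen V ∧ x ∈ V ∧ {i | (V ∩ F i).Nonempty}.Subsingleton

/-- Collectionwise normality: every discrete family of closed sets can be separated by
a pairwise disjoint family of open sets. -/
def CollectionwiseNormal (X : Type) [TopologicalSpace X] : Prop :=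
  ∀ (ι : Type) (F : ι → Set X), (∀ i, IsClosed (F i)) → DiscreteFamily X F →
    ∃ U : ι → Set X, (∀ i, IsOpen (U i)) ∧ (∀ i, F i ⊆ U i) ∧
      ∀ i j, i ≠ j → U i ∩ U j = ∅

open Set Filter Topology Uniformity

section BingAux

variable {X : Type} [TopologicalSpace X]

lemma DiscreteFamily.isClosed_iUnion' {ι : Type} {F : ι → Set X}
    (hd : DiscreteFamily X F) (hc : ∀ i, IsClosed (F i)) : IsClosed (⋃ i, F i) := by
  rw [← isOpen_compl_iff, isOpen_iff_forall_mem_open]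
  intro x hx
  obtain ⟨V, hVo, hxV, hsub⟩ := hd x
  by_cases h : ∃ i, (V ∩ F i).Nonempty
  · obtain ⟨i₀, hi₀⟩ := h
    refine ⟨V \ F i₀, ?_, hVo.sdiff (hc i₀), hxV, fun hxF => hx (mem_iUnion.2 ⟨i₀, hxF⟩)⟩
    rintro y ⟨hyV, hyF⟩ hyU
    obtain ⟨j, hyj⟩ := mem_iUnion.1 hyU
    exact hyF (hsub (x := j) ⟨y, hyV, hyj⟩ hi₀ ▸ hyj)
  · push_neg at h
    refine ⟨V, fun y hyV hyU => ?_, hVo, hxV⟩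
    obtain ⟨j, hyj⟩ := mem_iUnion.1 hyU
    exact absurd (h j) (Set.nonempty_iff_ne_empty.1 ⟨y, hyV, hyj⟩)

lemma CollectionwiseNormal.normalSpace (h : CollectionwiseNormal X) : NormalSpace X := by
  constructor
  intro s t hs ht hst
  set F : Bool → Set X := fun b => bif b then s else t with hF
  have hcl : ∀ b, IsClosed (F b) := by rintro (_ | _) <;> simpa [hF]
  have hdisc : DiscreteFamily X F := by
    intro x
    by_cases hx : x ∈ s
    · refine ⟨tᶜ, ht.isOpen_compl, disjoint_left.1 hst hx, ?_⟩
      have hsub : {i : Bool | (tᶜ ∩ F i).Nonempty} ⊆ {true} := by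
        rintro (_ | _) hi
        · obtain ⟨y, hy1, hy2⟩ := hi
          exact absurd (show y ∈ t from hy2) hy1
        · rfl
      exact Set.subsingleton_singleton.anti hsub
    · refine ⟨sᶜ, hs.isOpen_compl, hx, ?_⟩
      have hsub : {i : Bool | (sᶜ ∩ F i).Nonempty} ⊆ {false} := by
        rintro (_ | _) hi
        · rfl
        · obtain ⟨y, hy1, hy2⟩ := hi
          exact absurd (show y ∈ s from hy2) hy1
      exact Set.subsingleton_singleton.anti hsub
  obtain ⟨U, hUo, hFU, hdisj⟩ := h Bool F hcl hdisc
  exact ⟨U true, U false, hUo _, hUo _, hFU true, hFU false,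
    Set.disjoint_iff_inter_eq_empty.2 (hdisj true false (by simp))⟩

lemma exists_discrete_open_separation (h : CollectionwiseNormal X) {ι : Type}
    {F : ι → Set X} (hc : ∀ i, IsClosed (F i)) (hd : DiscreteFamily X F) :
    ∃ W : ι → Set X, (∀ i, IsOpen (W i)) ∧ (∀ i, F i ⊆ W i) ∧
      (∀ i j, i ≠ j → W i ∩ W j = ∅) ∧ DiscreteFamily X W := by
  obtain ⟨W₀, hW₀o, hFW₀, hW₀d⟩ := h ι F hc hd
  haveI := h.normalSpace
  have hUcl : IsClosed (⋃ i, F i) := hd.isClosed_iUnion' hc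
  have hsub : (⋃ i, F i) ⊆ ⋃ i, W₀ i := Set.iUnion_mono hFW₀
  obtain ⟨T, hTo, hFT, hTcl⟩ := normal_exists_closure_subset hUcl (isOpen_iUnion hW₀o) hsub
  refine ⟨fun i => W₀ i ∩ T, fun i => (hW₀o i).inter hTo,
    fun i x hx => ⟨hFW₀ i hx, hFT (mem_iUnion.2 ⟨i, hx⟩)⟩, fun i j hij => ?_, ?_⟩
  · rw [← Set.subset_empty_iff]
    rintro y ⟨⟨h1, -⟩, ⟨h2, -⟩⟩
    exact hW₀d i j hij ▸ (⟨h1, h2⟩ : y ∈ W₀ i ∩ W₀ j)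
  · intro x
    by_cases hx : x ∈ closure T
    · obtain ⟨j, hj⟩ := mem_iUnion.1 (hTcl hx)
      refine ⟨W₀ j, hW₀o j, hj, ?_⟩
      have key : ∀ a, (W₀ j ∩ (W₀ a ∩ T)).Nonempty → a = j := by
        rintro a ⟨y, hy1, hy2, -⟩
        by_contra hne
        exact (hW₀d a j hne ▸ (⟨hy2, hy1⟩ : y ∈ W₀ a ∩ W₀ j) : y ∈ (∅ : Set X))
      exact fun a ha b hb => (key a ha).trans (key b hb).symm
    · refine ⟨(closure T)ᶜ, isClosed_closure.isOpen_compl, hx, ?_⟩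
      rintro a ⟨y, hy1, -, hyT⟩
      exact absurd (subset_closure hyT) hy1

lemma exists_monotone_development {G : ℕ → Set (Set X)} (hG : IsDevelopment X G) :
    ∃ G' : ℕ → Set (Set X), IsDevelopment X G' ∧
      ∀ k n, k ≤ n → ∀ V ∈ G' n, ∃ W ∈ G' k, V ⊆ W := by
  obtain ⟨hGo, hGc, hGd⟩ := hG
  classical
  refine ⟨fun n => {S | ∃ f : ℕ → Set X, (∀ i, f i ∈ G i) ∧
    S = ⋂ i ∈ Finset.range (n + 1), f i}, ⟨?_, ?_, ?_⟩, ?_⟩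
  · rintro n S ⟨f, hf, rfl⟩
    exact isOpen_biInter_finset fun i _ => hGo i (f i) (hf i)
  · intro n x
    choose f hf hxf using fun i => hGc i x
    exact ⟨_, ⟨f, hf, rfl⟩, Set.mem_iInter₂.2 fun i _ => hxf i⟩
  · intro x U hU hxU
    obtain ⟨n, hn⟩ := hGd x U hU hxU
    refine ⟨n, ?_⟩
    rintro V ⟨f, hf, rfl⟩ hxV
    have hxfn : x ∈ f n := Set.mem_iInter₂.1 hxV n (Finset.self_mem_range_succ n)
    intro y hy
    exact hn (f n) (hf n) hxfn (Set.mem_iInter₂.1 hy n (Finset.self_mem_range_succ n))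
  · intro k n hkn
    rintro V ⟨f, hf, rfl⟩
    refine ⟨⋂ i ∈ Finset.range (k + 1), f i, ⟨f, hf, rfl⟩, ?_⟩
    intro y hy
    exact Set.mem_iInter₂.2 fun i hi => Set.mem_iInter₂.1 hy i
      (Finset.mem_range.2 (lt_of_lt_of_le (Finset.mem_range.1 hi) (by omega)))

lemma exists_barycentric_refinement (hcwn : CollectionwiseNormal X)
    {G : ℕ → Set (Set X)} (hG : IsDevelopment X G)
    (hmono : ∀ k n, k ≤ n → ∀ V ∈ G n, ∃ W ∈ G k, V ⊆ W)
    (C : Set (Set X)) (hCo : ∀ U ∈ C, IsOpen U) (hCc : ∀ x : X, ∃ U ∈ C, x ∈ U) :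
    ∃ D : Set (Set X), (∀ W ∈ D, IsOpen W) ∧ (∀ x : X, ∃ W ∈ D, x ∈ W) ∧
      ∀ x : X, ∃ U ∈ C, ∀ W ∈ D, x ∈ W → W ⊆ U := by
  classical
  haveI hN := hcwn.normalSpace
  obtain ⟨hGo, hGc, hGd⟩ := hG
  set ι := ↥C with hιdef
  haveI hwo : IsWellOrder ι WellOrderingRel := WellOrderingRel.isWellOrder
  -- the closed discrete families F k α
  set F : ℕ → ι → Set X := fun k α =>
    {x | x ∈ (α : Set X) ∧ (∀ β : ι, WellOrderingRel β α → x ∉ (β : Set X)) ∧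
      ∀ V ∈ G k, x ∈ V → V ⊆ (α : Set X)} with hFdef
  have hFcl : ∀ k α, IsClosed (F k α) := by
    intro k α
    apply isClosed_of_closure_subset
    intro x hx
    have hmem : ∀ V : Set X, IsOpen V → x ∈ V → (V ∩ F k α).Nonempty := fun V hVo hxV =>
      mem_closure_iff.1 hx V hVo hxV
    have h2 : ∀ V ∈ G k, x ∈ V → V ⊆ (α : Set X) := by
      intro V hV hxV
      obtain ⟨y, hyV, hyF⟩ := hmem V (hGo k V hV) hxV
      exact hyF.2.2 V hV hyV
    refine ⟨?_, ?_, h2⟩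
    · obtain ⟨V, hV, hxV⟩ := hGc k x
      exact h2 V hV hxV hxV
    · intro β hβ hxβ
      obtain ⟨y, hyβ, hyF⟩ := hmem (β : Set X) (hCo (β : Set X) β.2) hxβ
      exact hyF.2.1 β hβ hyβ
  have hFdisc : ∀ k, DiscreteFamily X (F k) := by
    intro k x
    obtain ⟨V, hV, hxV⟩ := hGc k x
    refine ⟨V, hGo k V hV, hxV, ?_⟩
    intro α hα β hβ
    obtain ⟨y, hyV, hyF⟩ := hα
    obtain ⟨z, hzV, hzF⟩ := hβ
    have hVα : V ⊆ (α : Set X) := hyF.2.2 V hV hyV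
    have hVβ : V ⊆ (β : Set X) := hzF.2.2 V hV hzV
    rcases trichotomous_of WellOrderingRel α β with h | h | h
    · exact absurd (hVα hzV) (hzF.2.1 α h)
    · exact h
    · exact absurd (hVβ hyV) (hyF.2.1 β h)
  have hFcover : ∀ x : X, ∃ k α, x ∈ F k α := by
    intro x
    have hne : {α : ι | x ∈ (α : Set X)}.Nonempty := by
      obtain ⟨U, hU, hxU⟩ := hCc x; exact ⟨⟨U, hU⟩, hxU⟩
    have hwf : WellFounded (WellOrderingRel (α := ι)) := hwo.toIsWellFounded.wf
    have hα : x ∈ ((hwf.min _ hne : ι) : Set X) := hwf.min_mem _ hne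
    have hmin : ∀ β : ι, WellOrderingRel β (hwf.min _ hne) → x ∉ (β : Set X) :=
      fun β hβ hxβ => hwf.not_lt_min _ hxβ hβ
    obtain ⟨k, hk⟩ := hGd x _ (hCo _ (hwf.min _ hne).2) hα
    exact ⟨k, hwf.min _ hne, hα, hmin, hk⟩
  -- separate each F k by a discrete disjoint open family, intersected with the cover members
  choose W hWo hFW hWdisj hWdisc using fun k =>
    exists_discrete_open_separation hcwn (hFcl k) (hFdisc k)
  set W2 : ℕ → ι → Set X := fun k α => W k α ∩ (α : Set X) with hW2def
  have hW2o : ∀ k α, IsOpen (W2 k α) := fun k α => (hWo k α).inter (hCo _ α.2)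
  have hFW2 : ∀ k α, F k α ⊆ W2 k α := fun k α x hx => ⟨hFW k α hx, hx.1⟩
  have hW2disc : ∀ k, DiscreteFamily X (W2 k) := by
    intro k x
    obtain ⟨V, hVo, hxV, hsub⟩ := hWdisc k x
    exact ⟨V, hVo, hxV, fun α hα β hβ =>
      hsub (hα.mono (by exact inter_subset_inter_right V inter_subset_left))
           (hβ.mono (by exact inter_subset_inter_right V inter_subset_left))⟩
  -- the level sets
  set A : ℕ → Set X := fun n => ⋃ α, W2 n α with hAdef
  have hAo : ∀ n, IsOpen (A n) := fun n => isOpen_iUnion (hW2o n)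
  set A' : ℕ → Set X := fun n => ⋃ m ∈ Set.Iic n, A m with hA'def
  have hA'o : ∀ n, IsOpen (A' n) := fun n => isOpen_biUnion fun m _ => hAo m
  have hA'mono : ∀ m n, m ≤ n → A' m ⊆ A' n := fun m n h =>
    biUnion_subset_biUnion_left (Iic_subset_Iic.2 h)
  set E : ℕ → Set X := fun n => {x | ∀ V ∈ G n, x ∈ V → V ⊆ A' n} with hEdef
  have hEcl : ∀ n, IsClosed (E n) := by
    intro n
    apply isClosed_of_closure_subset
    intro x hx V hV hxV
    obtain ⟨y, hyV, hyE⟩ := mem_closure_iff.1 hx V (hGo n V hV) hxV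
    exact hyE V hV hyV
  have hEsub : ∀ n, E n ⊆ A' n := by
    intro n x hx
    obtain ⟨V, hV, hxV⟩ := hGc n x
    exact hx V hV hxV hxV
  have hEcover : ∀ x : X, ∃ n, x ∈ E n := by
    intro x
    obtain ⟨k, α, hx⟩ := hFcover x
    have hxA' : x ∈ A' k :=
      mem_biUnion (mem_Iic.2 le_rfl) (mem_iUnion.2 ⟨α, hFW2 k α hx⟩)
    obtain ⟨j, hj⟩ := hGd x (A' k) (hA'o k) hxA'
    refine ⟨max j k, ?_⟩
    intro V hV hxV
    obtain ⟨Wj, hWj, hVWj⟩ := hmono j (max j k) (le_max_left _ _) V hV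
    exact hVWj.trans ((hj Wj hWj (hVWj hxV)).trans (hA'mono k (max j k) (le_max_right _ _)))
  choose T hTo hET hTcl using fun n =>
    normal_exists_closure_subset (hEcl n) (hA'o n) (hEsub n)
  -- the locally finite open refinement R
  set R : ℕ × ι → Set X := fun p =>
    W2 p.1 p.2 \ ⋃ m ∈ Set.Iio p.1, closure (T m) with hRdef
  have hRo : ∀ p, IsOpen (R p) := fun p =>
    (hW2o p.1 p.2).sdiff ((Set.finite_Iio p.1).isClosed_biUnion fun m _ => isClosed_closure)
  have hRsub : ∀ p : ℕ × ι, R p ⊆ ((p.2 : ι) : Set X) := fun p =>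
    diff_subset.trans inter_subset_right
  have hRuniv : ⋃ p, R p = univ := by
    apply eq_univ_of_forall
    intro x
    have hex : ∃ m, x ∈ closure (T m) := by
      obtain ⟨n, hn⟩ := hEcover x
      exact ⟨n, subset_closure (hET n hn)⟩
    have hnfind := Nat.find_spec hex
    have hxA' : x ∈ A' (Nat.find hex) := hTcl _ hnfind
    obtain ⟨m, hm, hmA⟩ := mem_iUnion₂.1 hxA'
    obtain ⟨α, hα⟩ := mem_iUnion.1 hmA
    refine mem_iUnion.2 ⟨(m, α), hα, ?_⟩
    intro hcon
    obtain ⟨l, hl, hxl⟩ := mem_iUnion₂.1 hcon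
    exact Nat.find_min hex (lt_of_lt_of_le (mem_Iio.1 hl) (mem_Iic.1 hm)) hxl
  have hRlf : LocallyFinite R := by
    intro x
    obtain ⟨n, hn⟩ := hEcover x
    have hxT : x ∈ T n := hET n hn
    choose Vd hVdo hxVd hVdsub using fun m => hW2disc m x
    refine ⟨T n ∩ ⋂ m ∈ Set.Iic n, Vd m, ?_, ?_⟩
    · exact ((hTo n).inter ((Set.finite_Iic n).isOpen_biInter fun m _ => hVdo m)).mem_nhds
        ⟨hxT, mem_iInter₂.2 fun m _ => hxVd m⟩
    · have hsub : {p : ℕ × ι | (R p ∩ (T n ∩ ⋂ m ∈ Set.Iic n, Vd m)).Nonempty} ⊆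
          ⋃ m ∈ Set.Iic n, ({m} ×ˢ {α : ι | (Vd m ∩ W2 m α).Nonempty}) := by
        rintro ⟨m, α⟩ ⟨y, hyR, hyT, hyV⟩
        have hmn : m ≤ n := by
          by_contra hmn
          push_neg at hmn
          exact hyR.2 (mem_biUnion (mem_Iio.2 hmn) (subset_closure hyT))
        exact mem_biUnion (mem_Iic.2 hmn)
          ⟨rfl, ⟨y, mem_iInter₂.1 hyV m (mem_Iic.2 hmn), hyR.1⟩⟩
      refine Set.Finite.subset ?_ hsub
      exact Set.Finite.biUnion (Set.finite_Iic n) fun m _ =>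
        (Set.finite_singleton m).prod (hVdsub m).finite
  -- shrink to a closed locally finite cover
  obtain ⟨v, hvU, hvo, hvcl⟩ :=
    exists_iUnion_eq_closure_subset (u := R) hRo (fun x => hRlf.point_finite x) hRuniv
  set Ecl : ℕ × ι → Set X := fun p => closure (v p) with hEcldef
  have hEclcl : ∀ p, IsClosed (Ecl p) := fun p => isClosed_closure
  have hEclR : ∀ p, Ecl p ⊆ R p := hvcl
  have hEcllf : LocallyFinite Ecl := hRlf.subset hEclR
  have hEclcover : ∀ x : X, ∃ p, x ∈ Ecl p := by
    intro x
    obtain ⟨p, hp⟩ := mem_iUnion.1 (hvU ▸ mem_univ x)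
    exact ⟨p, subset_closure hp⟩
  set S : X → Set (ℕ × ι) := fun x => {p | x ∈ Ecl p} with hSdef
  have hSfin : ∀ x, (S x).Finite := fun x =>
    (hRlf.point_finite x).subset fun p hp => hEclR p hp
  set M : X → Set X := fun x =>
    ⋃ p, (if x ∈ Ecl p then (∅ : Set X) else Ecl p) with hMdef
  have hMcl : ∀ x, IsClosed (M x) := by
    intro x
    refine LocallyFinite.isClosed_iUnion ?_ ?_
    · refine hEcllf.subset fun p => ?_
      split_ifs
      · exact empty_subset _
      · exact le_rfl
    · intro p
      split_ifs
      · exact isClosed_empty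
      · exact hEclcl p
  set Wx : X → Set X := fun x => (⋂ p ∈ S x, R p) \ M x with hWxdef
  have hWxo : ∀ x, IsOpen (Wx x) := fun x =>
    (((hSfin x).isOpen_biInter fun p _ => hRo p).sdiff (hMcl x))
  have hxWx : ∀ x, x ∈ Wx x := by
    intro x
    refine ⟨mem_iInter₂.2 fun p hp => hEclR p hp, ?_⟩
    intro hcon
    obtain ⟨p, hp⟩ := mem_iUnion.1 hcon
    by_cases h : x ∈ Ecl p
    · rw [if_pos h] at hp; exact hp
    · rw [if_neg h] at hp; exact h hp
  refine ⟨{Z | ∃ y : X, Z = Wx y}, ?_, ?_, ?_⟩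
  · rintro Z ⟨y, rfl⟩; exact hWxo y
  · intro x; exact ⟨Wx x, ⟨x, rfl⟩, hxWx x⟩
  · intro x
    obtain ⟨p₀, hp₀⟩ := hEclcover x
    refine ⟨((p₀.2 : ι) : Set X), p₀.2.2, ?_⟩
    rintro Z ⟨y, rfl⟩ hxW
    have h2 : y ∈ Ecl p₀ := by
      by_contra hns
      exact hxW.2 (mem_iUnion.2 ⟨p₀, by rw [if_neg hns]; exact hp₀⟩)
    intro z hz
    exact hRsub p₀ (mem_iInter₂.1 hz.1 p₀ h2)

lemma exists_seq_of_step {α : Type*} (P : α → Prop) (Q : ℕ → α → α → Prop) (a0 : α)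
    (h0 : P a0) (hstep : ∀ k a, P a → ∃ b, P b ∧ Q k a b) :
    ∃ f : ℕ → α, f 0 = a0 ∧ (∀ k, P (f k)) ∧ ∀ k, Q k (f k) (f (k + 1)) := by
  choose g hgP hgQ using hstep
  refine ⟨fun n => (Nat.rec ⟨a0, h0⟩
    (fun k (ih : {a : α // P a}) => ⟨g k ih.1 ih.2, hgP k ih.1 ih.2⟩) n : {a : α // P a}).1,
    rfl, fun k => ?_, fun k => ?_⟩
  · exact (Nat.rec ⟨a0, h0⟩ (fun k (ih : {a : α // P a}) => ⟨g k ih.1 ih.2, hgP k ih.1 ih.2⟩) k :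
      {a : α // P a}).2
  · exact hgQ k _ _

lemma hard (hM : MooreSpace X) (hcwn : CollectionwiseNormal X) :
    TopologicalSpace.MetrizableSpace X := by
  classical
  obtain ⟨hT2, hReg, G0, hG0⟩ := hM
  obtain ⟨G, hG, hmono⟩ := exists_monotone_development hG0
  have hGo := hG.1
  have hGc := hG.2.1
  have hGd := hG.2.2
  -- a sequence of open covers, each barycentrically refining the previous one and `G`
  set P : Set (Set X) → Prop :=
    fun Cov => (∀ U ∈ Cov, IsOpen U) ∧ ∀ x : X, ∃ U ∈ Cov, x ∈ U with hPdef
  set Q : ℕ → Set (Set X) → Set (Set X) → Prop := fun k Cov D =>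
    ∀ x : X, ∃ U ∈ Cov, ∃ V ∈ G (k + 1), ∀ W ∈ D, x ∈ W → W ⊆ U ∩ V with hQdef
  have hstep : ∀ k Cov, P Cov → ∃ D, P D ∧ Q k Cov D := by
    intro k Cov hCov
    have hmo : ∀ U ∈ {S | ∃ U' ∈ Cov, ∃ V' ∈ G (k + 1), S = U' ∩ V'}, IsOpen U := by
      rintro U ⟨U', hU', V', hV', rfl⟩
      exact (hCov.1 U' hU').inter (hGo (k + 1) V' hV')
    have hmc : ∀ x : X, ∃ U ∈ {S | ∃ U' ∈ Cov, ∃ V' ∈ G (k + 1), S = U' ∩ V'}, x ∈ U := by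
      intro x
      obtain ⟨U', hU', hxU'⟩ := hCov.2 x
      obtain ⟨V', hV', hxV'⟩ := hGc (k + 1) x
      exact ⟨U' ∩ V', ⟨U', hU', V', hV', rfl⟩, hxU', hxV'⟩
    obtain ⟨D, hDo, hDc, hDb⟩ := exists_barycentric_refinement hcwn hG hmono _ hmo hmc
    refine ⟨D, ⟨hDo, hDc⟩, ?_⟩
    intro x
    obtain ⟨T, hT, hTst⟩ := hDb x
    obtain ⟨U, hU, V, hV, rfl⟩ := hT
    exact ⟨U, hU, V, hV, hTst⟩
  obtain ⟨H, -, hHP, hHQ⟩ := exists_seq_of_step P Q {univ}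
    ⟨fun U hU => by rw [mem_singleton_iff.1 hU]; exact isOpen_univ,
     fun x => ⟨univ, rfl, mem_univ x⟩⟩ hstep
  -- the entourages
  set Vk : ℕ → Set (X × X) := fun k => {p | ∃ U ∈ H k, p.1 ∈ U ∧ p.2 ∈ U} with hVkdef
  have hVrefl : ∀ k (x : X), (x, x) ∈ Vk k := by
    intro k x
    obtain ⟨U, hU, hxU⟩ := (hHP k).2 x
    exact ⟨U, hU, hxU, hxU⟩
  have hVsymm : ∀ k, ∀ p ∈ Vk k, Prod.swap p ∈ Vk k := by
    rintro k p ⟨U, hU, h1, h2⟩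
    exact ⟨U, hU, h2, h1⟩
  have hVstep : ∀ k, Vk (k + 1) ⊆ Vk k := by
    rintro k ⟨a, b⟩ ⟨U, hU, haU, hbU⟩
    obtain ⟨U', hU', V', hV', hst⟩ := hHQ k a
    exact ⟨U', hU', (hst U hU haU haU).1, (hst U hU haU hbU).1⟩
  have hVanti : ∀ k l, k ≤ l → Vk l ⊆ Vk k := by
    intro k l h
    induction l, h using Nat.le_induction with
    | base => exact subset_rfl
    | succ n hn ih => exact (hVstep n).trans ih
  have hVcomp : ∀ k, SetRel.comp (Vk (k + 1)) (Vk (k + 1)) ⊆ Vk k := by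
    rintro k ⟨a, b⟩ ⟨z, ⟨U1, hU1, haU1, hzU1⟩, ⟨U2, hU2, hzU2, hbU2⟩⟩
    obtain ⟨U', hU', V', hV', hst⟩ := hHQ k z
    exact ⟨U', hU', (hst U1 hU1 hzU1 haU1).1, (hst U2 hU2 hzU2 hbU2).1⟩
  -- the uniformity
  set FU : Filter (X × X) := ⨅ k, 𝓟 (Vk k) with hFUdef
  have hbasis : FU.HasBasis (fun _ : ℕ => True) Vk :=
    hasBasis_iInf_principal
      (fun i j => ⟨max i j, hVanti i _ (le_max_left i j), hVanti j _ (le_max_right i j)⟩)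
  have hmemVk : ∀ k, Vk k ∈ FU := fun k => hbasis.mem_of_mem trivial
  have hc1 : ∀ r ∈ FU, ∀ x : X, (x, x) ∈ r := by
    intro r hr x
    obtain ⟨k, -, hk⟩ := hbasis.mem_iff.1 hr
    exact hk (hVrefl k x)
  have hc2 : ∀ r ∈ FU, Prod.swap ⁻¹' r ∈ FU := by
    intro r hr
    obtain ⟨k, -, hk⟩ := hbasis.mem_iff.1 hr
    exact mem_of_superset (hmemVk k) fun p hp => hk (hVsymm k p hp)
  have hc3 : ∀ r ∈ FU, ∃ t ∈ FU, SetRel.comp t t ⊆ r := by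
    intro r hr
    obtain ⟨k, -, hk⟩ := hbasis.mem_iff.1 hr
    exact ⟨Vk (k + 1), hmemVk (k + 1), (hVcomp k).trans hk⟩
  let core : UniformSpace.Core X := UniformSpace.Core.mk' FU hc1 hc2 hc3
  have htop : ‹TopologicalSpace X› = core.toTopologicalSpace := by
    apply TopologicalSpace.ext_nhds
    intro x
    rw [core.nhds_toTopologicalSpace, show core.uniformity = FU from rfl]
    have hcb : (comap (Prod.mk x) FU).HasBasis (fun _ : ℕ => True)
        (fun k => Prod.mk x ⁻¹' Vk k) := hbasis.comap _
    apply le_antisymm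
    · rw [hcb.ge_iff]
      rintro k -
      obtain ⟨U, hU, hxU⟩ := (hHP k).2 x
      exact mem_of_superset (((hHP k).1 U hU).mem_nhds hxU) fun y hy => ⟨U, hU, hxU, hy⟩
    · intro s hs
      obtain ⟨O, hOsub, hOo, hxO⟩ := mem_nhds_iff.1 hs
      obtain ⟨n, hn⟩ := hGd x O hOo hxO
      refine hcb.mem_iff.2 ⟨n + 1, trivial, ?_⟩
      rintro y ⟨U, hU, hxU, hyU⟩
      obtain ⟨U', hU', V', hV', hst⟩ := hHQ n x
      obtain ⟨Wn, hWn, hV'W⟩ := hmono n (n + 1) (by omega) V' hV'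
      exact hOsub (hn Wn hWn (hV'W ((hst U hU hxU hxU).2)) (hV'W ((hst U hU hxU hyU).2)))
  letI us : UniformSpace X := UniformSpace.ofCoreEq core _ htop
  haveI : T2Space X := hT2
  haveI hcg : Filter.IsCountablyGenerated (𝓤 X) :=
    inferInstanceAs (Filter.IsCountablyGenerated (⨅ k, 𝓟 (Vk k)))
  exact UniformSpace.metrizableSpace

lemma easy (h : TopologicalSpace.MetrizableSpace X) :
    MooreSpace X ∧ CollectionwiseNormal X := by
  haveI := h
  letI : MetricSpace X := TopologicalSpace.metrizableSpaceMetric X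
  constructor
  · refine ⟨inferInstance, inferInstance,
      fun n => {S | ∃ x : X, S = Metric.ball x (1 / (n + 1))}, ?_, ?_, ?_⟩
    · rintro n U ⟨x, rfl⟩; exact Metric.isOpen_ball
    · intro n x
      exact ⟨_, ⟨x, rfl⟩, Metric.mem_ball_self (by positivity)⟩
    · intro x U hU hxU
      obtain ⟨ε, hε, hball⟩ := Metric.isOpen_iff.1 hU x hxU
      obtain ⟨n, hn⟩ := exists_nat_gt (2 / ε)
      refine ⟨n, ?_⟩
      rintro V ⟨y, rfl⟩ hxV z hz
      apply hball
      have h1 : dist z y < 1 / ((n : ℝ) + 1) := Metric.mem_ball.1 hz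
      have h2 : dist x y < 1 / ((n : ℝ) + 1) := Metric.mem_ball.1 hxV
      have hn1 : (0 : ℝ) < (n : ℝ) + 1 := by positivity
      have hkey : 2 / ((n : ℝ) + 1) < ε := by
        rw [div_lt_iff₀ hn1]
        have h5 : 2 / ε < (n : ℝ) + 1 := hn.trans (by linarith)
        calc (2 : ℝ) = 2 / ε * ε := by field_simp
          _ < ((n : ℝ) + 1) * ε := by exact mul_lt_mul_of_pos_right h5 hε
          _ = ε * ((n : ℝ) + 1) := by ring
      rw [Metric.mem_ball]
      calc dist z x ≤ dist z y + dist y x := dist_triangle _ _ _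
        _ < 1 / ((n : ℝ) + 1) + 1 / ((n : ℝ) + 1) := by rw [dist_comm y x]; linarith
        _ = 2 / ((n : ℝ) + 1) := by ring
        _ < ε := hkey
  · intro ι Fam hcl hd
    have hrad : ∀ i, ∀ x ∈ Fam i, ∃ ε : ℝ, 0 < ε ∧
        ∀ j, j ≠ i → Metric.ball x ε ∩ Fam j = ∅ := by
      intro i x hx
      obtain ⟨V, hVo, hxV, hsub⟩ := hd x
      obtain ⟨ε, hε, hball⟩ := Metric.isOpen_iff.1 hVo x hxV
      refine ⟨ε, hε, fun j hj => ?_⟩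
      rw [Set.eq_empty_iff_forall_notMem]
      rintro y ⟨hy1, hy2⟩
      exact hj (hsub ⟨y, hball hy1, hy2⟩ ⟨x, hxV, hx⟩)
    choose! ε hεpos hεdisj using hrad
    refine ⟨fun i => ⋃ x ∈ Fam i, Metric.ball x (ε i x / 3),
      fun i => isOpen_biUnion fun x _ => Metric.isOpen_ball, ?_, ?_⟩
    · intro i x hx
      exact mem_biUnion hx (Metric.mem_ball_self (by have := hεpos i x hx; linarith))
    · intro i j hij
      rw [Set.eq_empty_iff_forall_notMem]
      rintro z ⟨hz1, hz2⟩
      obtain ⟨x, hx, hzx⟩ := mem_iUnion₂.1 hz1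
      obtain ⟨y, hy, hzy⟩ := mem_iUnion₂.1 hz2
      have d1 : dist z x < ε i x / 3 := Metric.mem_ball.1 hzx
      have d2 : dist z y < ε j y / 3 := Metric.mem_ball.1 hzy
      rcases le_total (ε j y) (ε i x) with hle | hle
      · have hmem : y ∈ Metric.ball x (ε i x) := by
          rw [Metric.mem_ball]
          calc dist y x ≤ dist y z + dist z x := dist_triangle _ _ _
            _ < ε j y / 3 + ε i x / 3 := by rw [dist_comm y z]; linarith
            _ ≤ ε i x := by linarith [hεpos i x hx]
        exact (Set.eq_empty_iff_forall_notMem.1 (hεdisj i x hx j (Ne.symm hij)) y) ⟨hmem, hy⟩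
      · have hmem : x ∈ Metric.ball y (ε j y) := by
          rw [Metric.mem_ball]
          calc dist x y ≤ dist x z + dist z y := dist_triangle _ _ _
            _ < ε i x / 3 + ε j y / 3 := by rw [dist_comm x z]; linarith
            _ ≤ ε j y := by linarith [hεpos j y hy]
        exact (Set.eq_empty_iff_forall_notMem.1 (hεdisj j y hy i hij) x) ⟨hmem, hx⟩

end BingAux

/-- Bing's metrization theorem: a topological space is metrizable if and only if it is
a collectionwise normal Moore space. -/
theorem metrizable_iff_collectionwise_normal_moore (X : Type) [TopologicalSpace X] :
    TopologicalSpace.MetrizableSpace X ↔ (MooreSpace X ∧ CollectionwiseNormal X) := by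
  constructor
  · exact easy
  · exact fun ⟨hM, hcwn⟩ => hard hM hcwn
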